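/- Lemma 1.1(b): If the line ℝω contains a coroot (an element of R∨), then |R^+| − |R^+_ω| is odd. If ℝω contains no coroot and the map induced by −1 on X/ℝω belongs to the Weyl group W(R_ω) acting on X/ℝω, then |R^+| − |R^+_ω| is even. -/

import Mathlib

open Pointwise
open scoped Classical

namespace GKM

variable {V : Type*} [AddCommGroup V] [Module ℝ V]

/-- The dual cone `C* = {λ | λ ≥ 0 on C}` of a subset `C` of `V`. -/
def dualCone (C : Set V) : Set (Module.Dual ℝ V) := {l | ∀ x ∈ C, 0 ≤ l x}

/-- `C` is a closed convex polyhedral cone: the set of nonnegative linear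
combinations of a finite subset of `V`. -/
def IsPolyhedralCone (C : Set V) : Prop :=
  ∃ S : Finset V, C = {x | ∃ c : V → ℝ, (∀ v, 0 ≤ c v) ∧ x = ∑ v ∈ S, c v • v}

/-- `F` is a (closed) face of the cone `C`. -/
def IsFaceOf (F C : Set V) : Prop := ∃ l ∈ dualCone C, F = C ∩ {x | l x = 0}

/-- The dimension of (the linear span of) a subset of `V`. -/
noncomputable def sdim (F : Set V) : ℕ := Module.finrank ℝ (Submodule.span ℝ F)

/-- `ℤ`-valued characteristic function `ξ_S`. -/
noncomputable def ind {α : Type*} (S : Set α) (a : α) : ℤ := if a ∈ S then 1 else 0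

/-- `ψ_C(x,λ) = Σ_{F face of C} (−1)^{dim F} ξ_{(F^⊥)*}(x) · ξ_{F*}(λ)`,
where `(F^⊥)* = C + span F` and `F*` is the dual cone of `F`. -/
noncomputable def psi (C : Set V) (x : V) (l : Module.Dual ℝ V) : ℤ :=
  ∑ᶠ F ∈ {F : Set V | IsFaceOf F C},
    (-1 : ℤ) ^ sdim F * ind (C + (Submodule.span ℝ F : Set V)) x * ind (dualCone F) l

/-- `x` is regular for the hyperplane arrangement `{ker α | α ∈ S}`. -/
def IsRegular (S : Set (Module.Dual ℝ V)) (x : V) : Prop := ∀ α ∈ S, α x ≠ 0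

/-- `C` is a chamber of the arrangement `{ker α | α ∈ S}`: a connected component of
the set of regular points, equivalently (for a finite arrangement, which is the case
throughout) a nonempty maximal subset on which each `α ∈ S` has constant sign. -/
def IsChamber (S : Set (Module.Dual ℝ V)) (C : Set V) : Prop :=
  ∃ x, IsRegular S x ∧ C = {y | ∀ α ∈ S, 0 < α x * α y}

/-- The closure of a chamber, described combinatorially (for a chamber of a finite
hyperplane arrangement this coincides with the topological closure). -/
def chClosure (S : Set (Module.Dual ℝ V)) (C : Set V) : Set V :=
  {y | ∀ α ∈ S, ∀ x ∈ C, 0 ≤ α x * α y}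

/-- The hyperplane `ker α` separates `C₁` and `C₂`. -/
def Separates (α : Module.Dual ℝ V) (C₁ C₂ : Set V) : Prop :=
  ∀ x₁ ∈ C₁, ∀ x₂ ∈ C₂, α x₁ * α x₂ < 0

/-- `l(C₁,C₂)`: the number of hyperplanes of the arrangement separating `C₁`,`C₂`. -/
noncomputable def sep (S : Set (Module.Dual ℝ V)) (C₁ C₂ : Set V) : ℕ :=
  {H : Set V | ∃ α ∈ S, H = {x | α x = 0} ∧ Separates α C₁ C₂}.ncard

/-- `ε(C₁,C₂) = (−1)^{l(C₁,C₂)}`. -/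
noncomputable def eps (S : Set (Module.Dual ℝ V)) (C₁ C₂ : Set V) : ℤ :=
  (-1) ^ sep S C₁ C₂

/-- `ψ_R(C₀,x,λ) = Σ_C ε(C₀,C) ψ_{C̄}(x,λ)`, the sum over all chambers `C`. -/
noncomputable def psiR (S : Set (Module.Dual ℝ V)) (C₀ : Set V) (x : V)
    (l : Module.Dual ℝ V) : ℤ :=
  ∑ᶠ C ∈ {C : Set V | IsChamber S C}, eps S C₀ C * psi (chClosure S C) x l

/-- `λ ∈ X*` is `R`-regular: it vanishes on no nonzero element of a 1-dimensional
face of the closure of a chamber in `X`. -/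
def RRegular (S : Set (Module.Dual ℝ V)) (l : Module.Dual ℝ V) : Prop :=
  ∀ C : Set V, IsChamber S C → ∀ F : Set V, IsFaceOf F (chClosure S C) →
    sdim F = 1 → ∀ ω ∈ F, ω ≠ (0 : V) → l ω ≠ 0

/-- `ω` is a nonzero element of a 1-dimensional face of the closure of `C₀`. -/
def InOneDimFaceOfClosure (S : Set (Module.Dual ℝ V)) (C₀ : Set V) (ω : V) : Prop :=
  ω ≠ 0 ∧ ∃ F : Set V, IsFaceOf F (chClosure S C₀) ∧ sdim F = 1 ∧ ω ∈ F

/-- `(X, X*, R, R∨)` is a (reduced, crystallographic) root system, `R ⊂ X*`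
spanning `X*`, with coroot `α∨ = coroot α ∈ X` for each `α ∈ R`. -/
structure IsRootSystem (R : Set (Module.Dual ℝ V)) (coroot : Module.Dual ℝ V → V) : Prop where
  finite : R.Finite
  ne_zero : ∀ α ∈ R, α ≠ 0
  span_top : Submodule.span ℝ R = ⊤
  root_coroot_two : ∀ α ∈ R, α (coroot α) = 2
  pairing_int : ∀ α ∈ R, ∀ β ∈ R, ∃ n : ℤ, β (coroot α) = (n : ℝ)
  reflect_root_mem : ∀ α ∈ R, ∀ β ∈ R, β - β (coroot α) • α ∈ R
  reflect_coroot : ∀ α ∈ R, ∀ β ∈ R,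
    coroot (β - β (coroot α) • α) = coroot β - α (coroot β) • coroot α
  reduced : ∀ α ∈ R, ∀ c : ℝ, c • α ∈ R → c = 1 ∨ c = -1

/-- The Weyl group `W(R)`, the subgroup of `GL(X)` generated by the reflections
`s_α : x ↦ x − α(x)·α∨`, `α ∈ R`. -/
def weylGroup (R : Set (Module.Dual ℝ V)) (coroot : Module.Dual ℝ V → V) :
    Subgroup (V ≃ₗ[ℝ] V) :=
  Subgroup.closure {w : V ≃ₗ[ℝ] V | ∃ α ∈ R, ∀ x, w x = x - α x • coroot α}

/-- The set `R⁺` of roots positive on the chamber `C`. -/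
def posRoots (R : Set (Module.Dual ℝ V)) (C : Set V) : Set (Module.Dual ℝ V) :=
  {α ∈ R | ∀ x ∈ C, 0 < α x}

/-- The root system `R_ω = {α ∈ R | α(ω) = 0}` viewed on the quotient `X/ℝω`:
the set of functionals on `X/ℝω` whose pullback to `X` lies in `R`
(such a pullback automatically kills `ω`, hence lies in `R_ω`). -/
def quotRoots (R : Set (Module.Dual ℝ V)) (ω : V) :
    Set (Module.Dual ℝ (V ⧸ Submodule.span ℝ ({ω} : Set V))) :=
  {β | β.comp (Submodule.span ℝ ({ω} : Set V)).mkQ ∈ R}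

/-- The root system `R_α` (roots `β` with `α(β∨) = 0`) restricted to the
hyperplane `Y = ker α`. -/
def subRoots (R : Set (Module.Dual ℝ V)) (coroot : Module.Dual ℝ V → V)
    (α : Module.Dual ℝ V) : Set (Module.Dual ℝ ↥(LinearMap.ker α)) :=
  {m | ∃ β ∈ R, α (coroot β) = 0 ∧ m = β.comp (LinearMap.ker α).subtype}


/-- **Lemma 1.1(b)**: if the line `ℝω` contains a coroot then `|R⁺| − |R⁺_ω|` is odd;
if `ℝω` contains no coroot and `−1` on `X/ℝω` lies in `W(R_ω)` then it is even. -/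

private lemma even_card_invol_aux {A : Type*} [DecidableEq A] :
    ∀ (n : ℕ) (s : Finset A), s.card ≤ n → ∀ σ : A → A,
      (∀ a ∈ s, σ a ∈ s) → (∀ a ∈ s, σ (σ a) = a) → (∀ a ∈ s, σ a ≠ a) →
      Even s.card := by
  intro n
  induction n with
  | zero =>
    intro s hs σ _ _ _
    have : s.card = 0 := Nat.le_zero.mp hs
    simp [this]
  | succ n ih =>
    intro s hs σ hmem hinv hne
    rcases s.eq_empty_or_nonempty with rfl | ⟨a, ha⟩
    · simp
    · have hσa : σ a ∈ s := hmem a ha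
      have hσa' : σ a ≠ a := hne a ha
      set t := (s.erase a).erase (σ a) with htdef
      have htmem : ∀ x, x ∈ t ↔ x ∈ s ∧ x ≠ a ∧ x ≠ σ a := by
        intro x
        simp only [htdef, Finset.mem_erase]
        tauto
      have h1 : σ a ∈ s.erase a := Finset.mem_erase.mpr ⟨hσa', hσa⟩
      have hc1 : (s.erase a).card + 1 = s.card := Finset.card_erase_add_one ha
      have hc2 : t.card + 1 = (s.erase a).card := Finset.card_erase_add_one h1
      have hcard : s.card = t.card + 2 := by omega
      have htle : t.card ≤ n := by omega
      have hEv : Even t.card := by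
        apply ih t htle σ
        · intro x hx
          obtain ⟨hxs, hxa, hxσa⟩ := (htmem x).mp hx
          refine (htmem (σ x)).mpr ⟨hmem x hxs, ?_, ?_⟩
          · intro h
            apply hxσa
            rw [← hinv x hxs, h]
          · intro h
            apply hxa
            rw [← hinv x hxs, h, hinv a ha]
        · intro x hx
          exact hinv x ((htmem x).mp hx).1
        · intro x hx
          exact hne x ((htmem x).mp hx).1
      obtain ⟨k, hk⟩ := hEv
      exact ⟨k + 1, by omega⟩

private lemma even_ncard_invol {A : Type*} (S : Set A) (hS : S.Finite) (σ : A → A)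
    (hmem : ∀ a ∈ S, σ a ∈ S) (hinv : ∀ a ∈ S, σ (σ a) = a) (hne : ∀ a ∈ S, σ a ≠ a) :
    Even S.ncard := by
  classical
  rw [Set.ncard_eq_toFinset_card S hS]
  apply even_card_invol_aux hS.toFinset.card hS.toFinset le_rfl σ
  · intro a ha
    exact hS.mem_toFinset.mpr (hmem a (hS.mem_toFinset.mp ha))
  · intro a ha
    exact hinv a (hS.mem_toFinset.mp ha)
  · intro a ha
    exact hne a (hS.mem_toFinset.mp ha)

private lemma odd_ncard_invol {A : Type*} (S : Set A) (hS : S.Finite) (σ : A → A) (a₀ : A)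
    (ha₀ : a₀ ∈ S) (hmem : ∀ a ∈ S, σ a ∈ S) (hinv : ∀ a ∈ S, σ (σ a) = a)
    (hfix : ∀ a ∈ S, (σ a = a ↔ a = a₀)) : Odd S.ncard := by
  have hσa₀ : σ a₀ = a₀ := (hfix a₀ ha₀).mpr rfl
  have hT : Even (S \ {a₀}).ncard := by
    apply even_ncard_invol _ hS.diff σ
    · rintro a ⟨haS, hane⟩
      refine ⟨hmem a haS, ?_⟩
      simp only [Set.mem_singleton_iff] at hane ⊢
      intro h
      apply hane
      rw [← hinv a haS, h, hσa₀]
    · rintro a ⟨haS, -⟩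
      exact hinv a haS
    · rintro a ⟨haS, hane⟩ h
      simp only [Set.mem_singleton_iff] at hane
      exact hane ((hfix a haS).mp h)
  have hc : (S \ {a₀}).ncard + 1 = S.ncard := Set.ncard_diff_singleton_add_one ha₀ hS
  obtain ⟨k, hk⟩ := hT
  exact ⟨k, by omega⟩

theorem lemma_1_1_b
    {V : Type*} [AddCommGroup V] [Module ℝ V] [FiniteDimensional ℝ V]
    (R : Set (Module.Dual ℝ V)) (coroot : Module.Dual ℝ V → V)
    (hRS : IsRootSystem R coroot)
    (C₀ : Set V) (hC₀ : IsChamber R C₀)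
    (ω : V) (hωface : InOneDimFaceOfClosure R C₀ ω)
    (Rω RP RPω : Set (Module.Dual ℝ V))
    (hRω : Rω = {α ∈ R | α ω = 0})
    (hRP : RP = posRoots R C₀) (hRPω : RPω = Rω ∩ RP) :
    -- if `ℝω` contains a coroot, the difference is odd
    ((∃ α ∈ R, ∃ c : ℝ, coroot α = c • ω) →
      Odd ((RP.ncard : ℤ) - (RPω.ncard : ℤ))) ∧
    -- if `ℝω` contains no coroot and `−1_{X/ℝω} ∈ W(R_ω)`, the difference is even
    ((¬ ∃ α ∈ R, ∃ c : ℝ, coroot α = c • ω) →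
      (∃ w ∈ weylGroup Rω coroot, ∀ x : V, w x + x ∈ Submodule.span ℝ ({ω} : Set V)) →
      Even ((RP.ncard : ℤ) - (RPω.ncard : ℤ))) := by
  obtain ⟨hωne, F, hF, hFdim, hωF⟩ := hωface
  obtain ⟨x₀, hx₀reg, hC₀eq⟩ := hC₀
  obtain ⟨l, hl, hFeq⟩ := hF
  have hωcl : ∀ α ∈ R, ∀ x ∈ C₀, 0 ≤ α x * α ω := by
    have : ω ∈ chClosure R C₀ := by rw [hFeq] at hωF; exact hωF.1
    exact this
  have hx₀C₀ : x₀ ∈ C₀ := by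
    rw [hC₀eq]
    exact fun α hα => mul_self_pos.mpr (hx₀reg α hα)
  have hC₀ne0 : ∀ α ∈ R, ∀ x ∈ C₀, α x ≠ 0 := by
    intro α hα x hx h0
    rw [hC₀eq] at hx
    have h := hx α hα
    rw [h0, mul_zero] at h
    exact lt_irrefl 0 h
  have hneg : ∀ γ ∈ R, -γ ∈ R := by
    intro γ hγ
    have h := hRS.reflect_root_mem γ hγ γ hγ
    rw [hRS.root_coroot_two γ hγ] at h
    rwa [show γ - (2:ℝ) • γ = -γ by module] at h
  have hnegco : ∀ γ ∈ R, coroot (-γ) = -coroot γ := by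
    intro γ hγ
    have h := hRS.reflect_coroot γ hγ γ hγ
    rw [hRS.root_coroot_two γ hγ] at h
    rw [show γ - (2:ℝ) • γ = -γ by module] at h
    rw [h]
    module
  set S : Set (Module.Dual ℝ V) := {β | β ∈ R ∧ 0 < β ω} with hSdef
  have hRPsubR : RP ⊆ R := by rw [hRP]; exact fun β hβ => hβ.1
  have hposω : ∀ β ∈ R, 0 < β ω → β ∈ RP := by
    intro β hβ hβω
    rw [hRP]
    refine ⟨hβ, fun x hx => ?_⟩
    have h1 := hωcl β hβ x hx
    have h2 := hC₀ne0 β hβ x hx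
    rcases h2.lt_or_gt with h | h
    · nlinarith
    · exact h
  have hdiff : RP \ RPω = S := by
    ext β
    constructor
    · rintro ⟨hβRP, hβn⟩
      have hβR : β ∈ R := hRPsubR hβRP
      have hβx₀ : 0 < β x₀ := by
        rw [hRP] at hβRP
        exact hβRP.2 x₀ hx₀C₀
      have h0 : 0 ≤ β x₀ * β ω := hωcl β hβR x₀ hx₀C₀
      have hω0 : 0 ≤ β ω := by nlinarith
      refine ⟨hβR, ?_⟩
      rcases hω0.lt_or_eq with h | h
      · exact h
      · exfalso
        apply hβn
        rw [hRPω, hRω]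
        exact ⟨⟨hβR, h.symm⟩, hβRP⟩
    · rintro ⟨hβR, hβω⟩
      refine ⟨hposω β hβR hβω, ?_⟩
      intro hβRPω
      rw [hRPω, hRω] at hβRPω
      exact hβω.ne' hβRPω.1.2
  have hRfin := hRS.finite
  have hRPfin : RP.Finite := hRfin.subset hRPsubR
  have hsub : RPω ⊆ RP := by rw [hRPω]; exact Set.inter_subset_right
  have hSfin : S.Finite := hRfin.subset (fun β hβ => hβ.1)
  have hcount : (RP.ncard : ℤ) - (RPω.ncard : ℤ) = (S.ncard : ℤ) := by
    rw [← hdiff, Set.ncard_diff hsub (hRPfin.subset hsub)]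
    have hle := Set.ncard_le_ncard hsub hRPfin
    omega
  constructor
  · rintro ⟨α, hαR, c, hc⟩
    rw [hcount, Int.odd_coe_nat]
    have h2 : c * α ω = 2 := by
      have h := hRS.root_coroot_two α hαR
      rw [hc, map_smul, smul_eq_mul] at h
      exact h
    have hαω0 : α ω ≠ 0 := by
      intro h
      rw [h, mul_zero] at h2
      norm_num at h2
    obtain ⟨α, hαR, c, hc, h2, hαω⟩ :
        ∃ α ∈ R, ∃ c : ℝ, coroot α = c • ω ∧ c * α ω = 2 ∧ 0 < α ω := by
      rcases hαω0.lt_or_gt with h | h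
      · refine ⟨-α, hneg α hαR, -c, ?_, ?_, ?_⟩
        · rw [hnegco α hαR, hc, neg_smul]
        · simp only [LinearMap.neg_apply]
          linear_combination h2
        · simp only [LinearMap.neg_apply]
          linarith
      · exact ⟨α, hαR, c, hc, h2, h⟩
    have hβco : ∀ β : Module.Dual ℝ V, β (coroot α) = c * β ω := by
      intro β
      rw [hc, map_smul, smul_eq_mul]
    set σ : Module.Dual ℝ V → Module.Dual ℝ V := fun β => β (coroot α) • α - β with hσdef
    have hσR : ∀ β ∈ R, σ β ∈ R := by
      intro β hβ
      have h := hneg _ (hRS.reflect_root_mem α hαR β hβ)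
      rwa [show -(β - β (coroot α) • α) = σ β by rw [hσdef]; module] at h
    have hσω : ∀ β : Module.Dual ℝ V, σ β ω = β ω := by
      intro β
      simp only [hσdef, LinearMap.sub_apply, LinearMap.smul_apply, smul_eq_mul, hβco]
      linear_combination β ω * h2
    have hinv : ∀ β : Module.Dual ℝ V, σ (σ β) = β := by
      intro β
      have h1 : σ β (coroot α) = β (coroot α) := by
        simp only [hσdef, LinearMap.sub_apply, LinearMap.smul_apply, smul_eq_mul,
          hRS.root_coroot_two α hαR]
        ring
      show σ β (coroot α) • α - σ β = β
      rw [h1, hσdef]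
      module
    have hmemS : ∀ β ∈ S, σ β ∈ S := by
      rintro β ⟨hβR, hβω⟩
      exact ⟨hσR β hβR, by rw [hσω]; exact hβω⟩
    have hfix : ∀ β ∈ S, σ β = β ↔ β = α := by
      rintro β ⟨hβR, hβω⟩
      constructor
      · intro h
        have hβk : β = (β (coroot α) / 2) • α := by
          ext x
          have hx := LinearMap.congr_fun h x
          simp only [hσdef, LinearMap.sub_apply, LinearMap.smul_apply, smul_eq_mul] at hx ⊢
          linear_combination -hx / 2
        rcases hRS.reduced α hαR (β (coroot α) / 2) (by rw [← hβk]; exact hβR) with hk | hk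
        · rw [hβk, hk, one_smul]
        · exfalso
          rw [hβk, hk] at hβω
          simp only [LinearMap.smul_apply, smul_eq_mul, neg_one_mul] at hβω
          linarith
      · rintro rfl
        show β (coroot β) • β - β = β
        rw [hRS.root_coroot_two β hαR]
        module
    exact odd_ncard_invol S hSfin σ α ⟨hαR, hαω⟩ hmemS (fun a _ => hinv a) hfix
  · rintro hno ⟨w, hwW, hw⟩
    rw [hcount, Int.even_coe_nat]
    set P : (V ≃ₗ[ℝ] V) → Prop := fun u =>
      u ω = ω ∧ ∀ β ∈ R, β.comp (u : V →ₗ[ℝ] V) ∈ R ∧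
        coroot (β.comp (u : V →ₗ[ℝ] V)) = u.symm (coroot β) with hPdef
    have hPmul : ∀ u v : V ≃ₗ[ℝ] V, P u → P v → P (u * v) := by
      rintro u v ⟨huω, hu⟩ ⟨hvω, hv⟩
      constructor
      · show u (v ω) = ω
        rw [hvω, huω]
      · intro β hβ
        have hcomp : β.comp ((u * v : V ≃ₗ[ℝ] V) : V →ₗ[ℝ] V)
            = (β.comp (u : V →ₗ[ℝ] V)).comp (v : V →ₗ[ℝ] V) := rfl
        rw [hcomp]
        obtain ⟨h1, h2⟩ := hu β hβ
        obtain ⟨h3, h4⟩ := hv _ h1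
        refine ⟨h3, ?_⟩
        rw [h4, h2]
        rfl
    have hPgen : ∀ u ∈ {w : V ≃ₗ[ℝ] V | ∃ α ∈ Rω, ∀ x, w x = x - α x • coroot α},
        P u ∧ P u⁻¹ := by
      rintro u ⟨γ, hγ, hu⟩
      rw [hRω] at hγ
      obtain ⟨hγR, hγω⟩ := hγ
      have huu : ∀ x, u (u x) = x := by
        intro x
        rw [hu (u x), hu x]
        rw [show γ (x - γ x • coroot γ) = γ x - γ x * γ (coroot γ) by
          rw [map_sub, map_smul, smul_eq_mul]]
        rw [hRS.root_coroot_two γ hγR]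
        module
      have hum : u * u = 1 := by
        ext x
        exact huu x
      have huinv : u⁻¹ = u := inv_eq_of_mul_eq_one_right hum
      have husymm : ∀ y, u.symm y = u y := by
        intro y
        show u⁻¹ y = u y
        rw [huinv]
      have hPu : P u := by
        constructor
        · rw [hu ω, hγω, zero_smul, sub_zero]
        · intro β hβ
          have hb : β.comp (u : V →ₗ[ℝ] V) = β - β (coroot γ) • γ := by
            ext x
            simp only [LinearMap.comp_apply, LinearEquiv.coe_coe, hu x, map_sub, map_smul,
              smul_eq_mul, LinearMap.sub_apply, LinearMap.smul_apply]
            ring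
          rw [hb]
          refine ⟨hRS.reflect_root_mem γ hγR β hβ, ?_⟩
          rw [hRS.reflect_coroot γ hγR β hβ, husymm, hu]
      exact ⟨hPu, by rw [huinv]; exact hPu⟩
    have hP1 : P 1 := by
      refine ⟨rfl, fun β hβ => ?_⟩
      have h1 : β.comp ((1 : V ≃ₗ[ℝ] V) : V →ₗ[ℝ] V) = β := by ext x; rfl
      rw [h1]
      exact ⟨hβ, rfl⟩
    have hPw : P w ∧ P w⁻¹ := by
      refine Subgroup.closure_induction (p := fun u _ => P u ∧ P u⁻¹)
        (fun x hx => hPgen x hx) ⟨hP1, by rw [inv_one]; exact hP1⟩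
        (fun x y hx hy h1 h2 => ⟨hPmul x y h1.1 h2.1,
          by rw [mul_inv_rev]; exact hPmul _ _ h2.2 h1.2⟩)
        (fun x hx h => ⟨h.2, by rw [inv_inv]; exact h.1⟩) hwW
    obtain ⟨⟨hwω, hwR⟩, -⟩ := hPw
    have hww : ∀ x, w (w x) = x := by
      intro x
      obtain ⟨t, ht⟩ := Submodule.mem_span_singleton.mp (hw x)
      have h0 := congrArg w ht
      rw [map_smul, hwω, map_add] at h0
      have h2 : w (w x) + w x = x + w x := by
        rw [h0.symm.trans ht]
        abel
      exact add_right_cancel h2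
    have hwsymm : ∀ y, w.symm y = w y := by
      intro y
      apply w.injective
      rw [LinearEquiv.apply_symm_apply, hww]
    apply even_ncard_invol S hSfin (fun β => β.comp (w : V →ₗ[ℝ] V))
    · rintro β ⟨hβR, hβω⟩
      refine ⟨(hwR β hβR).1, ?_⟩
      show 0 < β (w ω)
      rw [hwω]
      exact hβω
    · rintro β ⟨hβR, -⟩
      ext x
      show β (w (w x)) = β x
      rw [hww]
    · rintro β ⟨hβR, hβω⟩ hfixβ
      have h5 := (hwR β hβR).2
      rw [hfixβ, hwsymm] at h5
      obtain ⟨t, ht⟩ := Submodule.mem_span_singleton.mp (hw (coroot β))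
      rw [← h5] at ht
      have h3 : t • ω = (2:ℝ) • coroot β := by
        rw [two_smul]
        exact ht
      have h4 : coroot β = (t / 2) • ω := by
        have heq : (2:ℝ) • coroot β = (2:ℝ) • ((t / 2) • ω) := by
          rw [← h3, smul_smul]
          congr 1
          ring
        exact smul_right_injective V two_ne_zero heq
      exact hno ⟨β, hβR, t / 2, h4⟩


end GKM
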